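/- Let f ∈ 𝒮(ℝ), χ ∈ L²_per with ‖χ‖_{L²[0,1]} = 1, and define ψ^ε(x) := ε^{−1/4} f((x − q)/√ε) χ(x/ε) for given q ∈ ℝ. Then ‖ψ^ε‖²_{L²(ℝ)} → ‖f‖²_{L²(ℝ)} · ‖χ‖²_{L²[0,1]} = ‖f‖²_{L²} as ε ↓ 0; more precisely, if χ ∈ L^∞, |‖ψ^ε‖²_{L²} − ‖f‖²_{L²}‖χ‖²_{L²[0,1]}| = o(1). -/

import Mathlib

open MeasureTheory Filter Topology

section Aux
open Set

/-- Bounded measurable functions are interval integrable. -/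
lemma bddMeas_intervalIntegrable {h : ℝ → ℝ} (hm : Measurable h) {C : ℝ}
    (hb : ∀ y, |h y| ≤ C) (a b : ℝ) : IntervalIntegrable h volume a b := by
  rw [intervalIntegrable_iff]
  refine Integrable.mono' (g := fun _ => C) ?_ hm.aestronglyMeasurable.restrict ?_
  · exact integrableOn_const measure_Ioc_lt_top.ne
  · exact Eventually.of_forall fun y => by simpa [Real.norm_eq_abs] using hb y

/-- Core half-line estimate via Fubini. -/
lemma core_halfline (g g' h : ℝ → ℝ) (C B : ℝ) (hB : 0 ≤ B) (hC : 0 ≤ C)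
    (hderiv : ∀ y, HasDerivAt g (g' y) y)
    (hg'c : Continuous g')
    (hg'int : Integrable g')
    (htg' : Integrable (fun t => t * g' t))
    (hgtop : Tendsto g atTop (𝓝 0))
    (hhm : Measurable h) (hhb : ∀ y, |h y| ≤ C)
    (hΦ : ∀ t : ℝ, |∫ y in (0:ℝ)..t, h y| ≤ B) :
    |∫ y in Set.Ioi (0:ℝ), g y * h y| ≤ B * ∫ y, |g' y| := by
  -- representation of g via its derivative
  have hrep : ∀ y : ℝ, (∫ t in Set.Ioi y, g' t) = - g y := by
    intro y
    have h1 : Tendsto (fun T => ∫ t in y..T, g' t) atTop (𝓝 (∫ t in Set.Ioi y, g' t)) :=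
      intervalIntegral_tendsto_integral_Ioi y hg'int.integrableOn tendsto_id
    have h2 : Tendsto (fun T => ∫ t in y..T, g' t) atTop (𝓝 (0 - g y)) := by
      have : ∀ T : ℝ, (∫ t in y..T, g' t) = g T - g y := fun T =>
        intervalIntegral.integral_eq_sub_of_hasDerivAt (fun t _ => hderiv t)
          (hg'c.intervalIntegrable y T)
      simp only [this]
      exact hgtop.sub tendsto_const_nhds
    have := tendsto_nhds_unique h1 h2
    simpa using this
  set S : Set (ℝ × ℝ) := {p : ℝ × ℝ | 0 < p.1 ∧ p.1 < p.2} with hS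
  have hSmeas : MeasurableSet S :=
    (measurableSet_lt measurable_const measurable_fst).inter
      (measurableSet_lt measurable_fst measurable_snd)
  set F : ℝ × ℝ → ℝ := S.indicator (fun p => h p.1 * g' p.2) with hF
  have hFmeas : Measurable F :=
    ((hhm.comp measurable_fst).mul (hg'c.measurable.comp measurable_snd)).indicator hSmeas
  -- the y-section for fixed t
  have hsec : ∀ t : ℝ, (fun y => F (y, t)) = (Set.Ioo (0:ℝ) t).indicator
      (fun y => h y * g' t) := by
    intro t
    funext y
    simp only [hF, Set.indicator_apply, hS, Set.mem_setOf_eq, Set.mem_Ioo]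
  -- the t-section for fixed y
  have hsec' : ∀ y : ℝ, 0 < y → (fun t => F (y, t)) = (Set.Ioi y).indicator
      (fun t => h y * g' t) := by
    intro y hy
    funext t
    simp only [hF, Set.indicator_apply, hS, Set.mem_setOf_eq, Set.mem_Ioi, hy, true_and]
  have hsec'' : ∀ y : ℝ, ¬ (0 < y) → (fun t => F (y, t)) = fun _ => (0:ℝ) := by
    intro y hy
    funext t
    simp only [hF, Set.indicator_apply, hS, Set.mem_setOf_eq, hy, false_and, if_false]
  -- integrability on the product
  have hFint : Integrable F (volume.prod volume) := by
    rw [MeasureTheory.integrable_prod_iff' hFmeas.aestronglyMeasurable]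
    constructor
    · refine Eventually.of_forall fun t => ?_
      rw [hsec t]
      rw [integrable_indicator_iff measurableSet_Ioo]
      refine Integrable.mono' (g := fun _ => C * |g' t|) ?_
        ((hhm.mul measurable_const).aestronglyMeasurable.restrict) ?_
      · exact integrableOn_const measure_Ioo_lt_top.ne
      · refine Eventually.of_forall fun y => ?_
        rw [Real.norm_eq_abs, abs_mul]
        exact mul_le_mul_of_nonneg_right (hhb y) (abs_nonneg _)
    · refine Integrable.mono' (g := fun t => C * |t * g' t|)
        ((htg'.abs.const_mul C)) (hFmeas.norm.stronglyMeasurable.integral_prod_left'.aestronglyMeasurable) ?_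
      refine Eventually.of_forall fun t => ?_
      rw [Real.norm_eq_abs, abs_of_nonneg (integral_nonneg fun y => norm_nonneg _)]
      have : (fun y => ‖F (y, t)‖) = (Set.Ioo (0:ℝ) t).indicator
          (fun y => ‖h y * g' t‖) := by
        funext y
        rw [show F (y, t) = (Set.Ioo (0:ℝ) t).indicator (fun y => h y * g' t) y from
          congrFun (hsec t) y]
        exact (norm_indicator_eq_indicator_norm _ y)
      rw [this, integral_indicator measurableSet_Ioo]
      calc ∫ y in Set.Ioo (0:ℝ) t, ‖h y * g' t‖
          ≤ ∫ _ in Set.Ioo (0:ℝ) t, C * |g' t| := by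
            refine setIntegral_mono_on ?_ ?_ measurableSet_Ioo fun y _ => ?_
            · refine Integrable.mono' (g := fun _ => C * |g' t|) ?_
                (((hhm.mul measurable_const).norm).aestronglyMeasurable.restrict) ?_
              · exact integrableOn_const measure_Ioo_lt_top.ne
              · refine Eventually.of_forall fun y => ?_
                rw [norm_norm, Real.norm_eq_abs, abs_mul]
                exact mul_le_mul_of_nonneg_right (hhb y) (abs_nonneg _)
            · exact integrableOn_const measure_Ioo_lt_top.ne
            · rw [Real.norm_eq_abs, abs_mul]
              exact mul_le_mul_of_nonneg_right (hhb y) (abs_nonneg _)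
        _ ≤ C * |t * g' t| := by
            rw [setIntegral_const, smul_eq_mul, Real.volume_real_Ioo, sub_zero]
            rcases le_or_gt t 0 with ht | ht
            · rw [max_eq_right ht]
              simp only [zero_mul]
              positivity
            · rw [max_eq_left ht.le, abs_mul, abs_of_pos ht]
              ring_nf
              exact le_rfl
  -- Fubini swap
  have swap := MeasureTheory.integral_integral_swap (μ := volume) (ν := volume)
    (f := fun y t => F (y, t)) hFint
  -- evaluate the left side
  have hL : (∫ y, ∫ t, F (y, t)) = - ∫ y in Set.Ioi (0:ℝ), g y * h y := by
    have h1 : (fun y => ∫ t, F (y, t)) =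
        (Set.Ioi (0:ℝ)).indicator (fun y => -(g y * h y)) := by
      funext y
      by_cases hy : 0 < y
      · rw [hsec' y hy, integral_indicator measurableSet_Ioi, integral_const_mul,
          hrep y, Set.indicator_of_mem (Set.mem_Ioi.mpr hy)]
        ring
      · rw [hsec'' y hy, Set.indicator_of_notMem (by simpa using hy)]
        exact integral_zero _ _
    rw [h1, integral_indicator measurableSet_Ioi, integral_neg]
  -- bound the right side
  have hR : |∫ t, ∫ y, F (y, t)| ≤ B * ∫ y, |g' y| := by
    have hb : ∀ t : ℝ, ‖∫ y, F (y, t)‖ ≤ B * |g' t| := by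
      intro t
      have : (∫ y, F (y, t)) = (∫ y in Set.Ioo (0:ℝ) t, h y) * g' t := by
        have := hsec t
        calc (∫ y, F (y, t)) = ∫ y, (Set.Ioo (0:ℝ) t).indicator (fun y => h y * g' t) y := by
              congr 1
          _ = ∫ y in Set.Ioo (0:ℝ) t, h y * g' t := integral_indicator measurableSet_Ioo
          _ = (∫ y in Set.Ioo (0:ℝ) t, h y) * g' t := integral_mul_const _ _
      rw [this, Real.norm_eq_abs, abs_mul]
      refine mul_le_mul_of_nonneg_right ?_ (abs_nonneg _)
      rcases le_or_gt t 0 with ht | ht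
      · rw [Set.Ioo_eq_empty (not_lt.mpr ht)]
        simpa using hB
      · rw [← MeasureTheory.integral_Ioc_eq_integral_Ioo,
          ← intervalIntegral.integral_of_le ht.le]
        exact hΦ t
    calc |∫ t, ∫ y, F (y, t)| ≤ ∫ t, B * |g' t| := by
          rw [← Real.norm_eq_abs]
          exact norm_integral_le_of_norm_le (hg'int.abs.const_mul B)
            (Eventually.of_forall hb)
      _ = B * ∫ y, |g' y| := integral_const_mul _ _
  have : |- ∫ y in Set.Ioi (0:ℝ), g y * h y| ≤ B * ∫ y, |g' y| := by
    rw [← hL, swap]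
    exact hR
  simpa using this

/-- Full-line estimate. -/
lemma core_fullline (g g' h : ℝ → ℝ) (C B : ℝ) (hB : 0 ≤ B) (hC : 0 ≤ C)
    (hderiv : ∀ y, HasDerivAt g (g' y) y)
    (hg'c : Continuous g')
    (hg'int : Integrable g')
    (htg' : Integrable (fun t => t * g' t))
    (hgtop : Tendsto g atTop (𝓝 0))
    (hgbot : Tendsto g atBot (𝓝 0))
    (hgh : Integrable (fun y => g y * h y))
    (hhm : Measurable h) (hhb : ∀ y, |h y| ≤ C)
    (hΦ : ∀ t : ℝ, |∫ y in (0:ℝ)..t, h y| ≤ B) :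
    |∫ y, g y * h y| ≤ 2 * B * ∫ y, |g' y| := by
  have hsplit : (∫ y in Set.Iic (0:ℝ), g y * h y) + (∫ y in Set.Ioi (0:ℝ), g y * h y)
      = ∫ y, g y * h y := intervalIntegral.integral_Iic_add_Ioi hgh.integrableOn hgh.integrableOn
  have hpos : |∫ y in Set.Ioi (0:ℝ), g y * h y| ≤ B * ∫ y, |g' y| :=
    core_halfline g g' h C B hB hC hderiv hg'c hg'int htg' hgtop hhm hhb hΦ
  have hneg : |∫ y in Set.Iic (0:ℝ), g y * h y| ≤ B * ∫ y, |g' y| := by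
    have hrefl : (∫ y in Set.Ioi (0:ℝ), g (-y) * h (-y)) = ∫ y in Set.Iic (0:ℝ), g y * h y := by
      simpa using integral_comp_neg_Ioi (0:ℝ) (fun y => g y * h y)
    rw [← hrefl]
    have key := core_halfline (fun y => g (-y)) (fun y => -g' (-y)) (fun y => h (-y)) C B hB hC
      (fun y => by
        have h1 := (hderiv (-y)).comp y (hasDerivAt_neg y)
        refine h1.congr_deriv ?_
        ring)
      ((hg'c.comp continuous_neg).neg)
      ((hg'int.comp_neg).neg)
      (by
        have h2 : Integrable (fun t : ℝ => (-t) * g' (-t)) := htg'.comp_neg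
        exact h2.congr (Eventually.of_forall fun t => by ring))
      (hgbot.comp tendsto_neg_atTop_atBot)
      (hhm.comp measurable_neg)
      (fun y => hhb (-y))
      (fun t => by
        rw [intervalIntegral.integral_comp_neg, neg_zero, intervalIntegral.integral_symm,
          abs_neg]
        exact hΦ (-t))
    have heq : (∫ y, |-g' (-y)|) = ∫ y, |g' y| := by
      rw [show (fun y : ℝ => |-g' (-y)|) = fun y : ℝ => |g' (-y)| from funext fun y => abs_neg _]
      exact integral_neg_eq_self (fun z => |g' z|) volume
    rw [heq] at key
    exact key
  calc |∫ y, g y * h y| = |(∫ y in Set.Iic (0:ℝ), g y * h y)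
        + ∫ y in Set.Ioi (0:ℝ), g y * h y| := by rw [hsplit]
    _ ≤ |∫ y in Set.Iic (0:ℝ), g y * h y| + |∫ y in Set.Ioi (0:ℝ), g y * h y| := abs_add_le _ _
    _ ≤ 2 * B * ∫ y, |g' y| := by linarith

/-- Quantitative averaging bound against a periodic mean-one weight. -/
lemma avg_bound (g g' : ℝ → ℝ) (p : ℝ → ℝ)
    (hderiv : ∀ y, HasDerivAt g (g' y) y)
    (hg'c : Continuous g')
    (hg'int : Integrable g')
    (htg' : Integrable (fun t => t * g' t))
    (hgtop : Tendsto g atTop (𝓝 0))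
    (hgbot : Tendsto g atBot (𝓝 0))
    (hgint : Integrable g)
    (hpm : Measurable p) (Cp : ℝ) (hpb : ∀ z, |p z| ≤ Cp)
    (hpper : ∀ z, p (z + 1) = p z)
    (hpmean : (∫ z in (0:ℝ)..1, p z) = 1) :
    ∃ K : ℝ, 0 ≤ K ∧ ∀ a δ : ℝ, 0 < δ →
      |(∫ y, g y * p (a + y / δ)) - ∫ y, g y| ≤ K * δ := by
  have hCp0 : 0 ≤ Cp := le_trans (abs_nonneg _) (hpb 0)
  set k : ℝ → ℝ := fun z => p z - 1 with hk
  have kmeas : Measurable k := hpm.sub measurable_const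
  have kb : ∀ z, |k z| ≤ Cp + 1 := fun z =>
    le_trans (abs_sub (p z) 1) (by simpa using add_le_add_right (hpb z) 1)
  have kper : Function.Periodic k 1 := fun z => by simp [hk, hpper z]
  have kII : ∀ a b : ℝ, IntervalIntegrable k volume a b :=
    bddMeas_intervalIntegrable kmeas kb
  have pII : ∀ a b : ℝ, IntervalIntegrable p volume a b :=
    bddMeas_intervalIntegrable hpm hpb
  set P : ℝ → ℝ := fun s => ∫ x in (0:ℝ)..s, k x with hP
  have hk01 : (∫ x in (0:ℝ)..1, k x) = 0 := by
    have : (∫ x in (0:ℝ)..1, k x) = (∫ x in (0:ℝ)..1, p x) - ∫ x in (0:ℝ)..1, (1:ℝ) :=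
      intervalIntegral.integral_sub (pII 0 1) intervalIntegrable_const
    rw [this, hpmean]
    simp
  have Pper : Function.Periodic P 1 := by
    intro s
    have h1 : P (s + 1) - P s = ∫ x in s..(s+1), k x :=
      intervalIntegral.integral_interval_sub_left (kII 0 (s+1)) (kII 0 s)
    have h2 : (∫ x in s..(s+1), k x) = ∫ x in (0:ℝ)..(0+1), k x :=
      kper.intervalIntegral_add_eq s 0
    rw [h2, zero_add, hk01] at h1
    linarith [h1]
  have Pcont : Continuous P := intervalIntegral.continuous_primitive kII 0
  obtain ⟨M, hM⟩ := (isCompact_Icc (a := (0:ℝ)) (b := 1)).exists_bound_of_continuousOn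
    Pcont.continuousOn
  have hMall : ∀ s, |P s| ≤ M := by
    intro s
    have h1 : P (s - (⌊s⌋ : ℤ) * 1) = P s := Pper.sub_int_mul_eq ⌊s⌋
    have h2 : P (Int.fract s) = P s := by rw [← h1]; norm_num [Int.self_sub_floor]
    rw [← h2]
    have := hM (Int.fract s) ⟨Int.fract_nonneg s, (Int.fract_lt_one s).le⟩
    simpa [Real.norm_eq_abs] using this
  have hM0 : 0 ≤ M := le_trans (abs_nonneg _) (hMall 0)
  refine ⟨4 * M * ∫ y, |g' y|, by have h0 : (0:ℝ) ≤ ∫ y, |g' y| := integral_nonneg fun y => abs_nonneg _; positivity, ?_⟩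
  intro a δ hδ
  set h : ℝ → ℝ := fun y => k (a + y / δ) with hh
  have hmeas' : Measurable h := kmeas.comp (measurable_const.add (measurable_id.div_const δ))
  have hInt1 : Integrable (fun y => g y * p (a + y / δ)) := by
    have := hgint.bdd_mul ((hpm.comp (measurable_const.add
      (measurable_id.div_const δ))).aestronglyMeasurable)
      (Eventually.of_forall fun y => by simpa [Real.norm_eq_abs] using hpb (a + y / δ))
    exact this.congr (Eventually.of_forall fun y => mul_comm _ _)
  have hgh : Integrable (fun y => g y * h y) := by
    have : (fun y => g y * h y) = fun y => g y * p (a + y / δ) - g y := by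
      funext y; simp [hh, hk]; ring
    rw [this]
    exact hInt1.sub hgint
  have hΦ : ∀ t : ℝ, |∫ y in (0:ℝ)..t, h y| ≤ 2 * M * δ := by
    intro t
    have e1 : (∫ y in (0:ℝ)..t, h y) = δ • ∫ x in (0:ℝ)/δ..t/δ, k (a + x) :=
      intervalIntegral.integral_comp_div (fun x => k (a + x)) hδ.ne'
    have e2 : (∫ x in (0:ℝ)/δ..t/δ, k (a + x)) = ∫ x in a + (0:ℝ)/δ..a + t/δ, k x :=
      intervalIntegral.integral_comp_add_left k a
    have e3 : (∫ x in a + (0:ℝ)/δ..a + t/δ, k x) = P (a + t/δ) - P a := by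
      rw [show a + (0:ℝ)/δ = a by ring]
      exact (intervalIntegral.integral_interval_sub_left (kII 0 (a + t/δ)) (kII 0 a)).symm
    rw [e1, e2, e3, smul_eq_mul, abs_mul, abs_of_pos hδ]
    calc δ * |P (a + t/δ) - P a| ≤ δ * (|P (a + t/δ)| + |P a|) :=
          mul_le_mul_of_nonneg_left (abs_sub _ _) hδ.le
      _ ≤ δ * (M + M) := by
          have := hMall (a + t/δ)
          have := hMall a
          nlinarith
      _ = 2 * M * δ := by ring
  have key := core_fullline g g' h (Cp + 1) (2 * M * δ) (by positivity) (by positivity)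
    hderiv hg'c hg'int htg' hgtop hgbot hgh hmeas'
    (fun y => kb (a + y / δ)) hΦ
  have e4 : (∫ y, g y * p (a + y / δ)) - (∫ y, g y) = ∫ y, g y * h y := by
    rw [← integral_sub hInt1 hgint]
    congr 1
    funext y
    simp [hh, hk]; ring
  rw [e4]
  calc |∫ y, g y * h y| ≤ 2 * (2 * M * δ) * ∫ y, |g' y| := key
    _ = 4 * M * (∫ y, |g' y|) * δ := by ring

end Aux

/-- two-scale averaging lemma for Bloch wavepackets. For Schwartz `f`,
1-periodic bounded `χ` with `‖χ‖_{L²[0,1]} = 1`, and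
`ψ^ε(x) = ε^{−1/4} f((x−q)/√ε) χ(x/ε)`, the squared `L²(ℝ)` norm of `ψ^ε` converges to
`‖f‖²_{L²(ℝ)} ‖χ‖²_{L²[0,1]} = ‖f‖²_{L²(ℝ)}` as `ε ↓ 0`. -/
theorem wavepacket_norm_two_scale
    (f : SchwartzMap ℝ ℂ) (χ : ℝ → ℂ) (q : ℝ)
    (hmeas : Measurable χ)
    (hper : ∀ z, χ (z + 1) = χ z)
    (hbdd : ∃ C : ℝ, ∀ z, ‖χ z‖ ≤ C)
    (hnorm : (∫ z in (0:ℝ)..1, ‖χ z‖^2) = 1) :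
    Tendsto (fun ε : ℝ =>
        ∫ x : ℝ, ‖((ε ^ (-(1/4 : ℝ)) : ℝ) : ℂ) * (f ((x - q) / Real.sqrt ε) * χ (x / ε))‖^2)
      (𝓝[>] (0:ℝ))
      (𝓝 ((∫ x : ℝ, ‖f x‖^2) * ∫ z in (0:ℝ)..1, ‖χ z‖^2)) := by
  obtain ⟨Cχ, hCχ⟩ := hbdd
  have hCχ0 : 0 ≤ Cχ := le_trans (norm_nonneg _) (hCχ 0)
  set p : ℝ → ℝ := fun z => ‖χ z‖^2 with hp
  have hpm : Measurable p := hmeas.norm.pow_const 2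
  have hpb : ∀ z, |p z| ≤ Cχ^2 := fun z => by
    rw [hp, abs_of_nonneg (by positivity)]
    exact pow_le_pow_left₀ (norm_nonneg _) (hCχ z) 2
  have hpper : ∀ z, p (z + 1) = p z := fun z => by rw [hp]; simp only [hper z]
  set g : ℝ → ℝ := fun y => ‖f y‖^2 with hg
  set d := SchwartzMap.derivCLM ℝ ℂ f with hd
  set gd : ℝ → ℝ := fun y => 2 * ((f y).re * (d y).re + (f y).im * (d y).im) with hgd
  obtain ⟨Cf, hCfpos, hCf⟩ := f.decay 0 0
  have hCf' : ∀ x, ‖f x‖ ≤ Cf := fun x => by simpa [norm_iteratedFDeriv_zero] using hCf x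
  have hCf0 : 0 ≤ Cf := le_trans (norm_nonneg _) (hCf' 0)
  -- derivative of g
  have hderiv : ∀ y, HasDerivAt g (gd y) y := by
    intro y
    have hfd : HasDerivAt (⇑f) (deriv (⇑f) y) y := (f.differentiable y).hasDerivAt
    have hre : HasDerivAt (fun t => (f t).re) ((deriv (⇑f) y).re) y :=
      Complex.reCLM.hasFDerivAt.comp_hasDerivAt y hfd
    have him : HasDerivAt (fun t => (f t).im) ((deriv (⇑f) y).im) y :=
      Complex.imCLM.hasFDerivAt.comp_hasDerivAt y hfd
    have H := (hre.mul hre).add (him.mul him)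
    have hgeq : g = fun t => (f t).re * (f t).re + (f t).im * (f t).im := by
      funext t
      rw [hg]
      simp [Complex.sq_norm, Complex.normSq_apply]
    rw [hgeq]
    refine H.congr_deriv ?_
    rw [hgd]
    simp only [hd, SchwartzMap.derivCLM_apply]
    ring
  have hgdc : Continuous gd := by
    rw [hgd]
    exact continuous_const.mul (((Complex.continuous_re.comp f.continuous).mul
      (Complex.continuous_re.comp d.continuous)).add
      ((Complex.continuous_im.comp f.continuous).mul
      (Complex.continuous_im.comp d.continuous)))
  have gdbound : ∀ y, |gd y| ≤ 4 * Cf * ‖d y‖ := by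
    intro y
    have h1 : |(f y).re| ≤ Cf := le_trans (Complex.abs_re_le_norm _)
      (by exact hCf' y)
    have h2 : |(f y).im| ≤ Cf := le_trans (Complex.abs_im_le_norm _)
      (by exact hCf' y)
    have h3 : |(d y).re| ≤ ‖d y‖ := by
      exact Complex.abs_re_le_norm _
    have h4 : |(d y).im| ≤ ‖d y‖ := by
      exact Complex.abs_im_le_norm _
    have e1 : |gd y| ≤ 2 * (|(f y).re| * |(d y).re| + |(f y).im| * |(d y).im|) := by
      rw [hgd]
      calc |2 * ((f y).re * (d y).re + (f y).im * (d y).im)|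
          = 2 * |(f y).re * (d y).re + (f y).im * (d y).im| := by
            rw [abs_mul]; norm_num
        _ ≤ 2 * (|(f y).re * (d y).re| + |(f y).im * (d y).im|) := by
            have := abs_add_le ((f y).re * (d y).re) ((f y).im * (d y).im)
            linarith
        _ = 2 * (|(f y).re| * |(d y).re| + |(f y).im| * |(d y).im|) := by
            rw [abs_mul, abs_mul]
    have p1 : |(f y).re| * |(d y).re| ≤ Cf * ‖d y‖ :=
      mul_le_mul h1 h3 (abs_nonneg _) hCf0
    have p2 : |(f y).im| * |(d y).im| ≤ Cf * ‖d y‖ :=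
      mul_le_mul h2 h4 (abs_nonneg _) hCf0
    linarith
  have hgdint : Integrable gd := by
    refine ((d.integrable (μ := volume)).norm.const_mul (4 * Cf)).mono'
      hgdc.aestronglyMeasurable (Eventually.of_forall fun y => ?_)
    rw [Real.norm_eq_abs]
    exact gdbound y
  have htgd : Integrable (fun t => t * gd t) := by
    refine ((d.integrable_pow_mul volume 1).const_mul (4 * Cf)).mono'
      (continuous_id.mul hgdc).aestronglyMeasurable (Eventually.of_forall fun t => ?_)
    rw [Real.norm_eq_abs, abs_mul, pow_one]
    calc |t| * |gd t| ≤ |t| * (4 * Cf * ‖d t‖) :=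
          mul_le_mul_of_nonneg_left (gdbound t) (abs_nonneg t)
      _ = 4 * Cf * (‖t‖ * ‖d t‖) := by rw [Real.norm_eq_abs]; ring
  have hgint : Integrable g := by
    refine ((f.integrable (μ := volume)).norm.const_mul Cf).mono'
      (f.continuous.norm.pow 2).aestronglyMeasurable (Eventually.of_forall fun y => ?_)
    have hb : g y = ‖f y‖^2 := rfl
    rw [Real.norm_eq_abs, hb, abs_of_nonneg (by positivity), pow_two]
    exact mul_le_mul_of_nonneg_right (hCf' y) (norm_nonneg _)
  have hf0 : Tendsto (⇑f) (cocompact ℝ) (𝓝 0) := by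
    have := zero_at_infty (f.toZeroAtInfty)
    exact this.congr fun x => SchwartzMap.toZeroAtInfty_apply f x
  have hgc : Tendsto g (cocompact ℝ) (𝓝 0) := by
    have hcont : Continuous fun z : ℂ => ‖z‖^2 := continuous_norm.pow 2
    have := (hcont.tendsto 0).comp hf0
    simpa [hg, Function.comp_def] using this
  have hgtop : Tendsto g atTop (𝓝 0) :=
    hgc.mono_left (by rw [cocompact_eq_atBot_atTop]; exact le_sup_right)
  have hgbot : Tendsto g atBot (𝓝 0) :=
    hgc.mono_left (by rw [cocompact_eq_atBot_atTop]; exact le_sup_left)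
  obtain ⟨K, hK0, hK⟩ := avg_bound g gd p hderiv hgdc hgdint htgd hgtop hgbot hgint
    hpm (Cχ^2) hpb hpper hnorm
  -- main convergence of the substituted integrals
  have hmain : Tendsto (fun ε : ℝ => ∫ y, g y * p (q/ε + y/Real.sqrt ε)) (𝓝[>] (0:ℝ))
      (𝓝 (∫ y, g y)) := by
    have hb : ∀ᶠ ε in 𝓝[>] (0:ℝ),
        ‖(∫ y, g y * p (q/ε + y/Real.sqrt ε)) - ∫ y, g y‖ ≤ K * Real.sqrt ε := by
      filter_upwards [self_mem_nhdsWithin] with ε hε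
      rw [Real.norm_eq_abs]
      exact hK (q/ε) (Real.sqrt ε) (Real.sqrt_pos.mpr hε)
    have hs : Tendsto (fun ε : ℝ => K * Real.sqrt ε) (𝓝[>] (0:ℝ)) (𝓝 0) := by
      have h1 : Tendsto Real.sqrt (𝓝[>] (0:ℝ)) (𝓝 0) := by
        have := (Real.continuous_sqrt.tendsto 0).mono_left (nhdsWithin_le_nhds (s := Set.Ioi 0))
        simpa using this
      simpa using h1.const_mul K
    have hz := squeeze_zero_norm' hb hs
    have := hz.add (tendsto_const_nhds :
      Tendsto (fun _ : ℝ => ∫ y, g y) (𝓝[>] (0:ℝ)) (𝓝 (∫ y, g y)))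
    simpa using this
  -- change of variables identification
  have hchg : ∀ᶠ ε in 𝓝[>] (0:ℝ),
      (∫ x : ℝ, ‖((ε ^ (-(1/4 : ℝ)) : ℝ) : ℂ) * (f ((x - q) / Real.sqrt ε) * χ (x / ε))‖^2)
        = ∫ y, g y * p (q/ε + y/Real.sqrt ε) := by
    filter_upwards [self_mem_nhdsWithin] with ε hε
    have hε : (0:ℝ) < ε := hε
    set δ := Real.sqrt ε with hδdef
    have hδ : 0 < δ := Real.sqrt_pos.mpr hε
    have hδsq : δ * δ = ε := Real.mul_self_sqrt hε.le
    have hsq : (ε ^ (-(1/4):ℝ))^2 = ε ^ (-(1/2):ℝ) := by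
      rw [← Real.rpow_natCast (ε ^ (-(1/4):ℝ)) 2, ← Real.rpow_mul hε.le]
      norm_num
    set W : ℝ → ℝ := fun u => ε ^ (-(1/2):ℝ) * (g (u/δ) * p ((u + q)/ε)) with hW
    set V : ℝ → ℝ := fun y => ε ^ (-(1/2):ℝ) * (g y * p ((δ * y + q)/ε)) with hV
    have hpoint : ∀ x : ℝ, ‖((ε ^ (-(1/4 : ℝ)) : ℝ) : ℂ)
        * (f ((x - q) / δ) * χ (x / ε))‖^2 = W (x - q) := by
      intro x
      rw [hW]
      rw [norm_mul, norm_mul, Complex.norm_real, Real.norm_eq_abs,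
        abs_of_nonneg (Real.rpow_nonneg hε.le _), mul_pow, mul_pow, hsq]
      rw [hg, hp]
      congr 2
      rw [sub_add_cancel]
    calc (∫ x : ℝ, ‖((ε ^ (-(1/4 : ℝ)) : ℝ) : ℂ) * (f ((x - q) / δ) * χ (x / ε))‖^2)
        = ∫ x, W (x - q) := by
          congr 1
          funext x
          exact hpoint x
      _ = ∫ u, W u := integral_sub_right_eq_self W q
      _ = ∫ u, V (u/δ) := by
          congr 1
          funext u
          show ε ^ (-(1/2):ℝ) * (g (u/δ) * p ((u + q)/ε)) =
            ε ^ (-(1/2):ℝ) * (g (u/δ) * p ((δ * (u/δ) + q)/ε))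
          rw [mul_comm δ (u/δ), div_mul_cancel₀ u hδ.ne']
      _ = |δ| • ∫ y, V y := MeasureTheory.Measure.integral_comp_div V δ
      _ = ∫ y, g y * p (q/ε + y/δ) := by
          rw [abs_of_pos hδ, smul_eq_mul, hV]
          rw [MeasureTheory.integral_const_mul]
          have hone : δ * ε ^ (-(1/2):ℝ) = 1 := by
            rw [hδdef, Real.sqrt_eq_rpow, ← Real.rpow_add hε]
            norm_num
          rw [← mul_assoc, hone, one_mul]
          congr 1
          funext y
          congr 2
          rw [← hδsq]
          field_simp
          ring
  refine Tendsto.congr' (hchg.mono fun ε hε => hε.symm) ?_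
  rw [hnorm, mul_one]
  exact hmain
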